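/- Let A_1,…,A_r be positive semidefinite matrices with spectral decompositions A_i = Σ_k λ_{ik} Q_{ik}. Then P_e*({A_1,…,A_r}) ≥ (1/(2(r−1))) · Σ_{i<j} Σ_{k,ℓ} min{λ_{ik}, λ_{jℓ}} tr(Q_{ik} Q_{jℓ}). -/

import Mathlib

open Matrix
open scoped ComplexOrder Classical

/-- A POVM with `r` outcomes. -/
def IsPOVM {m : Type*} [Fintype m] [DecidableEq m] {r : ℕ}
    (M : Fin r → Matrix m m ℂ) : Prop :=
  (∀ i, (M i).PosSemidef) ∧ (∀ i, ((1 : Matrix m m ℂ) - M i).PosSemidef) ∧ (∑ i, M i = 1)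

/-- Optimal average error probability for discriminating the (possibly non-normalized)
ensemble `A`, minimized over all POVMs. -/
noncomputable def Pe {m : Type*} [Fintype m] [DecidableEq m] {r : ℕ}
    (A : Fin r → Matrix m m ℂ) : ℝ :=
  sInf { e | ∃ M : Fin r → Matrix m m ℂ, IsPOVM M ∧
      e = ∑ i, (Matrix.trace (A i * (1 - M i))).re }



section Aux

variable {d : ℕ}
open scoped MatrixOrder

lemma trace_re_nonneg' {A : Matrix (Fin d) (Fin d) ℂ} (hA : A.PosSemidef) :
    0 ≤ (Matrix.trace A).re := by
  have h : ∀ i, 0 ≤ (A i i).re := by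
    intro i
    have h2 := hA.dotProduct_mulVec_nonneg (Pi.single i 1)
    have heq : dotProduct (star (Pi.single i 1)) (A *ᵥ Pi.single i 1) = A i i := by
      simp [dotProduct, Matrix.mulVec, Pi.single_apply, apply_ite]
    rw [heq] at h2
    exact (Complex.le_def.mp h2).1
  rw [Matrix.trace, Complex.re_sum]
  exact Finset.sum_nonneg fun i _ => h i

lemma trace_mul_re_nonneg' {A B : Matrix (Fin d) (Fin d) ℂ}
    (hA : A.PosSemidef) (hB : B.PosSemidef) : 0 ≤ (Matrix.trace (A * B)).re := by
  have hsq : CFC.sqrt A * CFC.sqrt A = A := CFC.sqrt_mul_sqrt_self A hA.nonneg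
  have hpsd : (CFC.sqrt A * B * CFC.sqrt A).PosSemidef := by
    have := hB.mul_mul_conjTranspose_same (CFC.sqrt A)
    rwa [(CFC.sqrt_nonneg A).posSemidef.isHermitian.eq] at this
  generalize hg : CFC.sqrt A = s at hsq hpsd
  have h1 : Matrix.trace (A * B) = Matrix.trace (s * B * s) := by
    rw [Matrix.trace_mul_cycle, ← hsq, mul_assoc]
  rw [h1]
  exact trace_re_nonneg' hpsd

lemma posSemidef_sum' {ι : Type*} (s : Finset ι) (f : ι → Matrix (Fin d) (Fin d) ℂ)
    (h : ∀ i ∈ s, (f i).PosSemidef) : (∑ i ∈ s, f i).PosSemidef :=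
  Finset.sum_induction f _ (fun _ _ ha hb => ha.add hb) Matrix.PosSemidef.zero h

lemma sub_sq_posSemidef {N : Matrix (Fin d) (Fin d) ℂ} (hN : N.PosSemidef)
    (hN1 : ((1 : Matrix (Fin d) (Fin d) ℂ) - N).PosSemidef) : (N - N * N).PosSemidef := by
  have h := hN1.mul_mul_conjTranspose_same (CFC.sqrt N)
  rw [(CFC.sqrt_nonneg N).posSemidef.isHermitian.eq] at h
  have hsq : CFC.sqrt N * CFC.sqrt N = N := CFC.sqrt_mul_sqrt_self N hN.nonneg
  generalize hg : CFC.sqrt N = s at hsq h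
  have he : s * (1 - N) * s = N - N * N := by rw [← hsq]; noncomm_ring
  rwa [he] at h

lemma parallelogram' (X Y : Matrix (Fin d) (Fin d) ℂ) :
    (Matrix.trace ((X + Y)ᴴ * (X + Y))).re ≤
      2 * ((Matrix.trace (Xᴴ * X)).re + (Matrix.trace (Yᴴ * Y)).re) := by
  have hid : (X + Y)ᴴ * (X + Y) + (X - Y)ᴴ * (X - Y)
      = Xᴴ * X + Xᴴ * X + (Yᴴ * Y + Yᴴ * Y) := by
    simp only [conjTranspose_add, conjTranspose_sub]
    noncomm_ring
  have h0 : 0 ≤ (Matrix.trace ((X - Y)ᴴ * (X - Y))).re :=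
    trace_re_nonneg' (Matrix.posSemidef_conjTranspose_mul_self _)
  have ht := congrArg (fun A => (Matrix.trace A).re) hid
  simp only [Matrix.trace_add, Complex.add_re] at ht
  linarith

end Aux

section Pair
variable {d : ℕ}

lemma resolve_sum {t : ℕ} (QB : Fin t → Matrix (Fin d) (Fin d) ℂ)
    (hQBh : ∀ l, (QB l).IsHermitian) (hQBi : ∀ l, QB l * QB l = QB l)
    (hQBs : ∑ l, QB l = 1) (C : Matrix (Fin d) (Fin d) ℂ) :
    ∑ l, (QB l * C)ᴴ * (QB l * C) = Cᴴ * C := by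
  have hterm : ∀ l, (QB l * C)ᴴ * (QB l * C) = Cᴴ * QB l * C := by
    intro l
    rw [conjTranspose_mul, (hQBh l), mul_assoc, ← mul_assoc (QB l), hQBi l, ← mul_assoc]
  simp_rw [hterm]
  rw [← Finset.sum_mul, ← Finset.mul_sum, hQBs, mul_one]

lemma idem_posSemidef {Q : Matrix (Fin d) (Fin d) ℂ} (hh : Q.IsHermitian)
    (hi : Q * Q = Q) : Q.PosSemidef := by
  have := Matrix.posSemidef_conjTranspose_mul_self Q
  rwa [hh.eq, hi] at this

lemma sandwich_trace (Q P : Matrix (Fin d) (Fin d) ℂ) (hQh : Q.IsHermitian)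
    (hQi : Q * Q = Q) (hPh : Pᴴ = P) :
    Matrix.trace ((P * Q)ᴴ * (P * Q)) = Matrix.trace (Q * (P * P)) := by
  rw [conjTranspose_mul, hQh, hPh]
  -- trace (Q * P * (P * Q)) = trace (Q * (P * P))
  rw [Matrix.trace_mul_comm]
  -- trace ((P * Q) * (Q * P))
  rw [mul_assoc, ← mul_assoc Q, hQi, ← mul_assoc]
  -- trace ((P * Q) * P)
  rw [Matrix.trace_mul_comm, ← mul_assoc, Matrix.trace_mul_comm]

lemma pairwise_bound {tA tB : ℕ}
    (lamA : Fin tA → ℝ) (lamB : Fin tB → ℝ)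
    (QA : Fin tA → Matrix (Fin d) (Fin d) ℂ) (QB : Fin tB → Matrix (Fin d) (Fin d) ℂ)
    (hQAh : ∀ k, (QA k).IsHermitian) (hQAi : ∀ k, QA k * QA k = QA k)
    (hQAs : ∑ k, QA k = 1)
    (hQBh : ∀ l, (QB l).IsHermitian) (hQBi : ∀ l, QB l * QB l = QB l)
    (hQBs : ∑ l, QB l = 1)
    (hlamA : ∀ k, 0 ≤ lamA k) (hlamB : ∀ l, 0 ≤ lamB l)
    (M : Matrix (Fin d) (Fin d) ℂ) (hM : M.PosSemidef)
    (hM1 : ((1 : Matrix (Fin d) (Fin d) ℂ) - M).PosSemidef) :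
    (1/2) * (∑ k, ∑ l, min (lamA k) (lamB l) * (Matrix.trace (QA k * QB l)).re)
      ≤ (Matrix.trace ((∑ k, (lamA k : ℂ) • QA k) * ((1 : Matrix (Fin d) (Fin d) ℂ) - M))).re
        + (Matrix.trace ((∑ l, (lamB l : ℂ) • QB l) * M)).re := by
  set N : Matrix (Fin d) (Fin d) ℂ := 1 - M with hNdef
  have hNM : N + M = 1 := sub_add_cancel 1 M
  have hMN : ((1 : Matrix (Fin d) (Fin d) ℂ) - N).PosSemidef := by
    rw [hNdef, sub_sub_cancel]; exact hM
  have hNh : Nᴴ = N := hM1.1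
  have hMh : Mᴴ = M := hM.1
  set X : Fin tA → Fin tB → Matrix (Fin d) (Fin d) ℂ := fun k l => QB l * (N * QA k) with hXdef
  set Y : Fin tA → Fin tB → Matrix (Fin d) (Fin d) ℂ := fun k l => QB l * (M * QA k) with hYdef
  set x : Fin tA → Fin tB → ℝ := fun k l => (Matrix.trace ((X k l)ᴴ * X k l)).re with hxdef
  set y : Fin tA → Fin tB → ℝ := fun k l => (Matrix.trace ((Y k l)ᴴ * Y k l)).re with hydef
  have hxnn : ∀ k l, 0 ≤ x k l := fun k l =>
    trace_re_nonneg' (Matrix.posSemidef_conjTranspose_mul_self _)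
  have hynn : ∀ k l, 0 ≤ y k l := fun k l =>
    trace_re_nonneg' (Matrix.posSemidef_conjTranspose_mul_self _)
  -- parallelogram inequality per (k, l)
  have hpar : ∀ k l, (Matrix.trace (QA k * QB l)).re ≤ 2 * (x k l + y k l) := by
    intro k l
    have hXY : X k l + Y k l = QB l * QA k := by
      rw [hXdef, hYdef]; simp only
      rw [← mul_add, ← add_mul, hNM, one_mul]
    have htr : Matrix.trace ((QB l * QA k)ᴴ * (QB l * QA k)) = Matrix.trace (QA k * QB l) := by
      rw [conjTranspose_mul, (hQAh k), (hQBh l), mul_assoc, ← mul_assoc (QB l), hQBi l]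
      rw [← mul_assoc, Matrix.trace_mul_cycle, hQAi k]
    have := parallelogram' (X k l) (Y k l)
    rw [hXY, htr] at this
    exact this
  -- sum over l of x is bounded by trace (QA k * N)
  have hxsum : ∀ k, ∑ l, x k l ≤ (Matrix.trace (QA k * N)).re := by
    intro k
    have hsum : ∑ l, (X k l)ᴴ * X k l = (N * QA k)ᴴ * (N * QA k) :=
      resolve_sum QB hQBh hQBi hQBs (N * QA k)
    have htr1 : Matrix.trace ((N * QA k)ᴴ * (N * QA k)) = Matrix.trace (QA k * (N * N)) :=
      sandwich_trace (QA k) N (hQAh k) (hQAi k) hNh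
    have hkey : 0 ≤ (Matrix.trace (QA k * (N - N * N))).re :=
      trace_mul_re_nonneg' (idem_posSemidef (hQAh k) (hQAi k)) (sub_sq_posSemidef hM1 hMN)
    have hlin : (Matrix.trace (QA k * (N - N * N))).re
        = (Matrix.trace (QA k * N)).re - (Matrix.trace (QA k * (N * N))).re := by
      rw [mul_sub, Matrix.trace_sub, Complex.sub_re]
    have hx2 : ∑ l, x k l = (Matrix.trace (QA k * (N * N))).re := by
      rw [hxdef]; simp only
      rw [← Complex.re_sum, ← Matrix.trace_sum, hsum, htr1]
    rw [hx2]; rw [hlin] at hkey; linarith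
  -- sum over k of y is bounded by trace (QB l * M)
  have hysum : ∀ l, ∑ k, y k l ≤ (Matrix.trace (QB l * M)).re := by
    intro l
    have hZ : ∀ k, (Y k l)ᴴ = QA k * (M * QB l) := by
      intro k
      rw [hYdef]; simp only
      rw [conjTranspose_mul, conjTranspose_mul, (hQAh k), (hQBh l), hMh, mul_assoc]
    have hyz : ∀ k, Matrix.trace ((Y k l)ᴴ * (Y k l))
        = Matrix.trace ((QA k * (M * QB l))ᴴ * (QA k * (M * QB l))) := by
      intro k
      have hZc : (QA k * (M * QB l))ᴴ = Y k l := by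
        rw [← hZ k, conjTranspose_conjTranspose]
      calc Matrix.trace ((Y k l)ᴴ * (Y k l)) = Matrix.trace ((Y k l) * (Y k l)ᴴ) :=
            Matrix.trace_mul_comm _ _
        _ = Matrix.trace ((QA k * (M * QB l))ᴴ * (QA k * (M * QB l))) := by
            rw [hZ k, hZc]
    have hsum : ∑ k, (QA k * (M * QB l))ᴴ * (QA k * (M * QB l)) = (M * QB l)ᴴ * (M * QB l) :=
      resolve_sum QA hQAh hQAi hQAs (M * QB l)
    have htr1 : Matrix.trace ((M * QB l)ᴴ * (M * QB l)) = Matrix.trace (QB l * (M * M)) :=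
      sandwich_trace (QB l) M (hQBh l) (hQBi l) hMh
    have hkey : 0 ≤ (Matrix.trace (QB l * (M - M * M))).re :=
      trace_mul_re_nonneg' (idem_posSemidef (hQBh l) (hQBi l)) (sub_sq_posSemidef hM hM1)
    have hlin : (Matrix.trace (QB l * (M - M * M))).re
        = (Matrix.trace (QB l * M)).re - (Matrix.trace (QB l * (M * M))).re := by
      rw [mul_sub, Matrix.trace_sub, Complex.sub_re]
    have hy2 : ∑ k, y k l = (Matrix.trace (QB l * (M * M))).re := by
      rw [hydef]; simp only
      simp_rw [hyz]
      rw [← Complex.re_sum, ← Matrix.trace_sum, hsum, htr1]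
    rw [hy2]; rw [hlin] at hkey; linarith
  -- per-term inequality
  have hterm : ∀ k l, min (lamA k) (lamB l) * (Matrix.trace (QA k * QB l)).re
      ≤ 2 * (lamA k * x k l + lamB l * y k l) := by
    intro k l
    have h0 : 0 ≤ min (lamA k) (lamB l) := le_min (hlamA k) (hlamB l)
    have h1 : min (lamA k) (lamB l) * (Matrix.trace (QA k * QB l)).re
        ≤ min (lamA k) (lamB l) * (2 * (x k l + y k l)) :=
      mul_le_mul_of_nonneg_left (hpar k l) h0
    have h2 : min (lamA k) (lamB l) * x k l ≤ lamA k * x k l :=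
      mul_le_mul_of_nonneg_right (min_le_left _ _) (hxnn k l)
    have h3 : min (lamA k) (lamB l) * y k l ≤ lamB l * y k l :=
      mul_le_mul_of_nonneg_right (min_le_right _ _) (hynn k l)
    nlinarith [h1, h2, h3]
  -- expand traces of the spectral sums
  have hexpA : (Matrix.trace ((∑ k, (lamA k : ℂ) • QA k) * N)).re
      = ∑ k, lamA k * (Matrix.trace (QA k * N)).re := by
    rw [Finset.sum_mul]
    simp_rw [smul_mul_assoc]
    rw [Matrix.trace_sum, Complex.re_sum]
    refine Finset.sum_congr rfl fun k _ => ?_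
    rw [Matrix.trace_smul]
    simp [Complex.mul_re]
  have hexpB : (Matrix.trace ((∑ l, (lamB l : ℂ) • QB l) * M)).re
      = ∑ l, lamB l * (Matrix.trace (QB l * M)).re := by
    rw [Finset.sum_mul]
    simp_rw [smul_mul_assoc]
    rw [Matrix.trace_sum, Complex.re_sum]
    refine Finset.sum_congr rfl fun l _ => ?_
    rw [Matrix.trace_smul]
    simp [Complex.mul_re]
  -- combine
  have hbig : ∑ k, ∑ l, min (lamA k) (lamB l) * (Matrix.trace (QA k * QB l)).re
      ≤ 2 * ((∑ k, lamA k * (Matrix.trace (QA k * N)).re)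
            + (∑ l, lamB l * (Matrix.trace (QB l * M)).re)) := by
    have step1 : ∑ k, ∑ l, min (lamA k) (lamB l) * (Matrix.trace (QA k * QB l)).re
        ≤ ∑ k, ∑ l, 2 * (lamA k * x k l + lamB l * y k l) :=
      Finset.sum_le_sum fun k _ => Finset.sum_le_sum fun l _ => hterm k l
    have step2 : ∑ k, ∑ l, 2 * (lamA k * x k l + lamB l * y k l)
        = 2 * ((∑ k, lamA k * ∑ l, x k l) + (∑ l, lamB l * ∑ k, y k l)) := by
      have e1 : ∑ k, ∑ l, 2 * (lamA k * x k l + lamB l * y k l)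
          = 2 * ∑ k, ∑ l, (lamA k * x k l + lamB l * y k l) := by
        simp_rw [← Finset.mul_sum]
      rw [e1]
      congr 1
      refine Eq.symm ?_
      calc (∑ k, lamA k * ∑ l, x k l) + (∑ l, lamB l * ∑ k, y k l)
            = (∑ k, ∑ l, lamA k * x k l) + (∑ l, ∑ k, lamB l * y k l) := by
              simp_rw [Finset.mul_sum]
          _ = (∑ k, ∑ l, lamA k * x k l) + (∑ k, ∑ l, lamB l * y k l) := by
              rw [Finset.sum_comm (f := fun l k => lamB l * y k l)]
          _ = ∑ k, ∑ l, (lamA k * x k l + lamB l * y k l) := by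
              rw [← Finset.sum_add_distrib]
              refine Finset.sum_congr rfl fun k _ => ?_
              rw [← Finset.sum_add_distrib]
    have step3 : (∑ k, lamA k * ∑ l, x k l) + (∑ l, lamB l * ∑ k, y k l)
        ≤ (∑ k, lamA k * (Matrix.trace (QA k * N)).re)
          + (∑ l, lamB l * (Matrix.trace (QB l * M)).re) := by
      gcongr with k _ l _
      · exact hlamA k
      · exact hxsum k
      · exact hlamB l
      · exact hysum l
    calc ∑ k, ∑ l, min (lamA k) (lamB l) * (Matrix.trace (QA k * QB l)).re
        ≤ ∑ k, ∑ l, 2 * (lamA k * x k l + lamB l * y k l) := step1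
      _ = 2 * ((∑ k, lamA k * ∑ l, x k l) + (∑ l, lamB l * ∑ k, y k l)) := step2
      _ ≤ 2 * ((∑ k, lamA k * (Matrix.trace (QA k * N)).re)
            + (∑ l, lamB l * (Matrix.trace (QB l * M)).re)) := by linarith [step3]
  rw [hexpA, hexpB]
  linarith [hbig]

end Pair

lemma count_pairs {r : ℕ} (hr : 1 ≤ r) (e : Fin r → ℝ) :
    ∑ i, ∑ j ∈ Finset.univ.filter (fun j => i < j), (e i + e j)
      = ((r : ℝ) - 1) * ∑ i, e i := by
  have hIoi : ∀ i : Fin r, Finset.univ.filter (fun j => i < j) = Finset.Ioi i := by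
    intro i; ext j; simp
  have hIio : ∀ j : Fin r, Finset.univ.filter (fun i => i < j) = Finset.Iio j := by
    intro j; ext i; simp
  have hsplit : ∀ i : Fin r, ∑ j ∈ Finset.univ.filter (fun j => i < j), (e i + e j)
      = ((Finset.Ioi i).card : ℝ) * e i + ∑ j ∈ Finset.Ioi i, e j := by
    intro i
    rw [hIoi, Finset.sum_add_distrib, Finset.sum_const, nsmul_eq_mul]
  simp_rw [hsplit]
  rw [Finset.sum_add_distrib]
  have h2 : ∑ i, ∑ j ∈ Finset.Ioi i, e j = ∑ j : Fin r, ((Finset.Iio j).card : ℝ) * e j := by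
    calc ∑ i, ∑ j ∈ Finset.Ioi i, e j
        = ∑ i : Fin r, ∑ j : Fin r, if i < j then e j else 0 := by
          refine Finset.sum_congr rfl fun i _ => ?_
          rw [← hIoi, Finset.sum_filter]
      _ = ∑ j : Fin r, ∑ i : Fin r, if i < j then e j else 0 := Finset.sum_comm
      _ = ∑ j : Fin r, ((Finset.Iio j).card : ℝ) * e j := by
          refine Finset.sum_congr rfl fun j _ => ?_
          rw [← Finset.sum_filter, hIio, Finset.sum_const, nsmul_eq_mul]
  rw [h2, ← Finset.sum_add_distrib, Finset.mul_sum]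
  refine Finset.sum_congr rfl fun i _ => ?_
  rw [← add_mul]
  congr 1
  rw [Fin.card_Ioi, Fin.card_Iio]
  have : (r - 1 - (i : ℕ)) + (i : ℕ) = r - 1 := by omega
  rw [← Nat.cast_add, this, Nat.cast_sub hr, Nat.cast_one]

theorem one_shot_optimality {d r : ℕ}
    (A : Fin r → Matrix (Fin d) (Fin d) ℂ) (hA : ∀ i, (A i).PosSemidef)
    (T : Fin r → ℕ)
    (lam : ∀ i : Fin r, Fin (T i) → ℝ) (Q : ∀ i : Fin r, Fin (T i) → Matrix (Fin d) (Fin d) ℂ)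
    (hQherm : ∀ i k, (Q i k).IsHermitian) (hQidem : ∀ i k, Q i k * Q i k = Q i k)
    (hQorth : ∀ i, ∀ k k', k ≠ k' → Q i k * Q i k' = 0) (hQsum : ∀ i, ∑ k, Q i k = 1)
    (hlam : ∀ i k, 0 ≤ lam i k) (hlaminj : ∀ i, Function.Injective (lam i))
    (hspec : ∀ i, A i = ∑ k, ((lam i k : ℂ) • Q i k))
    (hr : 2 ≤ r) :
    (1 / (2 * ((r : ℝ) - 1))) *
      ∑ i, ∑ j ∈ Finset.univ.filter (fun j => i < j),
        ∑ k, ∑ l, min (lam i k) (lam j l) * (Matrix.trace (Q i k * Q j l)).re ≤ Pe A := by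
  have hrR : (1 : ℝ) ≤ (r : ℝ) - 1 := by
    have : (2 : ℝ) ≤ (r : ℝ) := by exact_mod_cast hr
    linarith
  apply le_csInf
  · -- the set is nonempty: use the trivial POVM concentrated on one outcome
    set z : Fin r := ⟨0, by omega⟩ with hz
    set M0 : Fin r → Matrix (Fin d) (Fin d) ℂ := fun i => if i = z then 1 else 0 with hM0
    refine ⟨∑ i, (Matrix.trace (A i * (1 - M0 i))).re, M0, ⟨?_, ?_, ?_⟩, rfl⟩
    · intro i
      by_cases h : i = z <;> simp [hM0, h, Matrix.PosSemidef.zero, Matrix.PosSemidef.one]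
    · intro i
      by_cases h : i = z <;> simp [hM0, h, Matrix.PosSemidef.zero, Matrix.PosSemidef.one]
    · simp [hM0, Finset.sum_ite_eq']
  · rintro b ⟨M, ⟨hMpsd, hM1psd, hMsum⟩, rfl⟩
    set e : Fin r → ℝ := fun i => (Matrix.trace (A i * (1 - M i))).re with hedef
    have claim : ∀ i j : Fin r, i < j →
        ∑ k, ∑ l, min (lam i k) (lam j l) * (Matrix.trace (Q i k * Q j l)).re
          ≤ 2 * (e i + e j) := by
      intro i j hij
      have hp := pairwise_bound (lam i) (lam j) (Q i) (Q j) (hQherm i) (hQidem i) (hQsum i)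
        (hQherm j) (hQidem j) (hQsum j) (hlam i) (hlam j) (M i) (hMpsd i) (hM1psd i)
      rw [← hspec i, ← hspec j] at hp
      have hmono : (Matrix.trace (A j * M i)).re ≤ (Matrix.trace (A j * (1 - M j))).re := by
        have hS : ((1 : Matrix (Fin d) (Fin d) ℂ) - M j) - M i
            = ∑ k ∈ (Finset.univ.erase j).erase i, M k := by
          have h1 : ∑ k, M k = M j + ∑ k ∈ Finset.univ.erase j, M k :=
            (Finset.add_sum_erase _ _ (Finset.mem_univ j)).symm
          have h2 : ∑ k ∈ Finset.univ.erase j, M k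
              = M i + ∑ k ∈ (Finset.univ.erase j).erase i, M k :=
            (Finset.add_sum_erase _ _ (Finset.mem_erase.mpr ⟨hij.ne, Finset.mem_univ i⟩)).symm
          have h3 : (1 : Matrix (Fin d) (Fin d) ℂ)
              = M j + (M i + ∑ k ∈ (Finset.univ.erase j).erase i, M k) := by
            rw [← hMsum, h1, h2]
          rw [h3]; abel
        have hpsd : (((1 : Matrix (Fin d) (Fin d) ℂ) - M j) - M i).PosSemidef := by
          rw [hS]; exact posSemidef_sum' _ _ (fun k _ => hMpsd k)
        have h0 := trace_mul_re_nonneg' (hA j) hpsd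
        have hlin : (Matrix.trace (A j * (((1 : Matrix (Fin d) (Fin d) ℂ) - M j) - M i))).re
            = (Matrix.trace (A j * (1 - M j))).re - (Matrix.trace (A j * M i)).re := by
          rw [mul_sub, Matrix.trace_sub, Complex.sub_re]
        rw [hlin] at h0
        linarith
      have he : e i = (Matrix.trace (A i * (1 - M i))).re := rfl
      have he' : e j = (Matrix.trace (A j * (1 - M j))).re := rfl
      rw [he, he']
      linarith
    have hsum2 : ∑ i, ∑ j ∈ Finset.univ.filter (fun j => i < j),
        (∑ k, ∑ l, min (lam i k) (lam j l) * (Matrix.trace (Q i k * Q j l)).re)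
        ≤ ∑ i, ∑ j ∈ Finset.univ.filter (fun j => i < j), 2 * (e i + e j) :=
      Finset.sum_le_sum fun i _ => Finset.sum_le_sum fun j hj =>
        claim i j (Finset.mem_filter.mp hj).2
    have hcnt : ∑ i, ∑ j ∈ Finset.univ.filter (fun j => i < j), 2 * (e i + e j)
        = 2 * (((r : ℝ) - 1) * ∑ i, e i) := by
      have : ∀ i : Fin r, ∑ j ∈ Finset.univ.filter (fun j => i < j), 2 * (e i + e j)
          = 2 * ∑ j ∈ Finset.univ.filter (fun j => i < j), (e i + e j) := by
        intro i; rw [Finset.mul_sum]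
      simp_rw [this]
      rw [← Finset.mul_sum, count_pairs (by omega) e]
    have hfinal : ∑ i, ∑ j ∈ Finset.univ.filter (fun j => i < j),
        (∑ k, ∑ l, min (lam i k) (lam j l) * (Matrix.trace (Q i k * Q j l)).re)
        ≤ 2 * ((r : ℝ) - 1) * ∑ i, e i := by
      rw [mul_assoc]; exact hsum2.trans_eq hcnt
    have hpos : 0 < 2 * ((r : ℝ) - 1) := by linarith
    rw [one_div, inv_mul_le_iff₀ hpos]
    exact hfinal.trans_eq rfl
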